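/- Let k > 0, Λ < 0, and ε = ±1 with εΛ < 0. Then the system of equations A = B = 1, where A = k·sqrt(−2εΛ/3)·ρ₀·sqrt((ρ₀+2γ)/(ρ₀+γ)) and B = sqrt(−εΛ/3)·ρ₀/sqrt(ρ₀+2γ), in the unknowns (ρ₀, γ) subject to ρ₀ ≠ 0, ρ₀+γ > 0, ρ₀+2γ > 0, implies 2γ = −ρ₀(1 + (εΛ/3)ρ₀) and ρ₀³ + (3/(4εΛk²))ρ₀ − 9/(4k²Λ²) = 0. -/

import Mathlib

theorem stmt5 (k Λ ε ρ₀ γ : ℝ) (hk : 0 < k) (hΛ : Λ < 0) (hε : ε = 1 ∨ ε = -1)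
    (hεΛ : ε * Λ < 0) (hρ₀ : ρ₀ ≠ 0) (h₁ : 0 < ρ₀ + γ) (h₂ : 0 < ρ₀ + 2*γ)
    (hA : k * Real.sqrt (-(2 * (ε*Λ)) / 3) * ρ₀ * Real.sqrt ((ρ₀ + 2*γ) / (ρ₀ + γ)) = 1)
    (hB : Real.sqrt (-(ε*Λ) / 3) * ρ₀ / Real.sqrt (ρ₀ + 2*γ) = 1) :
    2*γ = -ρ₀ * (1 + (ε*Λ/3) * ρ₀) ∧
    ρ₀^3 + (3 / (4 * (ε*Λ) * k^2)) * ρ₀ - 9 / (4 * k^2 * Λ^2) = 0 := by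
  have hε1 : ε = 1 := by
    rcases hε with h | h
    · exact h
    · nlinarith
  subst hε1
  simp only [one_mul] at *
  have hs2 : 0 < Real.sqrt (ρ₀ + 2*γ) := Real.sqrt_pos.mpr h₂
  have hBeq : Real.sqrt (-Λ/3) * ρ₀ = Real.sqrt (ρ₀ + 2*γ) :=
    (div_eq_one_iff_eq (ne_of_gt hs2)).mp hB
  have hρpos : 0 < ρ₀ := by
    rcases hρ₀.lt_or_gt with h | h
    · nlinarith [Real.sqrt_nonneg (-Λ/3)]
    · exact h
  have hEq1 : (-Λ/3) * ρ₀^2 = ρ₀ + 2*γ := by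
    have := congrArg (· ^ 2) hBeq
    simp only [mul_pow] at this
    rw [Real.sq_sqrt (by linarith : (0:ℝ) ≤ -Λ/3),
        Real.sq_sqrt (by linarith : (0:ℝ) ≤ ρ₀ + 2*γ)] at this
    exact this
  have hA2 : k^2 * (-(2*Λ)/3) * ρ₀^2 * ((ρ₀ + 2*γ)/(ρ₀ + γ)) = 1 := by
    have := congrArg (· ^ 2) hA
    simp only [mul_pow, one_pow] at this
    rw [Real.sq_sqrt (by linarith : (0:ℝ) ≤ -(2*Λ)/3),
        Real.sq_sqrt (by positivity : (0:ℝ) ≤ (ρ₀ + 2*γ)/(ρ₀ + γ))] at this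
    exact this
  have hA3 : k^2 * (-(2*Λ)/3) * ρ₀^2 * (ρ₀ + 2*γ) = ρ₀ + γ := by
    field_simp at hA2
    linarith
  constructor
  · linarith [hEq1]
  · have hk2 : k^2 ≠ 0 := by positivity
    have hΛ0 : Λ ≠ 0 := ne_of_lt hΛ
    have hP : 4*Λ^2*k^2*ρ₀^3 + 3*Λ*ρ₀ - 9 = 0 := by
      apply mul_left_cancel₀ hρ₀
      rw [mul_zero]
      linear_combination 18*hA3 + (-12*Λ*k^2*ρ₀^2 - 9)*hEq1
    field_simp
    linear_combination hP
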